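/- arXiv:math/0409509 — 9 statements merged into one kernel-verified Lean document; each statement's English description precedes it below -/
import Mathlib

section
/- Define a(n) = Σ_{k=0}^{n} ((C(n,k) mod 2) · 2^k). Then for all n ≥ 0, a(2n+1) = 3·a(2n). -/
/-- `a n = Σ_{k=0}^{n} (C(n,k) mod 2) · 2^k`. -/
def a (n : ℕ) : ℕ := ∑ k ∈ Finset.range (n + 1), (Nat.choose n k % 2) * 2 ^ k

lemma sum_even_odd (f : ℕ → ℕ) (m : ℕ) :
    ∑ k ∈ Finset.range (2 * m), f k = ∑ j ∈ Finset.range m, (f (2 * j) + f (2 * j + 1)) := by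
  induction m with
  | zero => simp
  | succ m ih =>
    have : 2 * (m + 1) = (2 * m + 1) + 1 := by ring
    rw [this, Finset.sum_range_succ, Finset.sum_range_succ, ih, Finset.sum_range_succ]
    ring

lemma lucas2 (n k : ℕ) :
    Nat.choose n k % 2 = (Nat.choose (n % 2) (k % 2) * Nat.choose (n / 2) (k / 2)) % 2 := by
  have := @Choose.choose_modEq_choose_mod_mul_choose_div_nat n k 2 ⟨Nat.prime_two⟩
  exact this

lemma c1 (n j : ℕ) : Nat.choose (2 * n) (2 * j) % 2 = Nat.choose n j % 2 := by
  rw [lucas2]; simp [Nat.mul_mod_right, Nat.mul_div_cancel_left]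

lemma c2 (n j : ℕ) : Nat.choose (2 * n) (2 * j + 1) % 2 = 0 := by
  rw [lucas2]
  have : (2 * j + 1) % 2 = 1 := by omega
  simp [Nat.mul_mod_right, this]

lemma c3 (n j : ℕ) : Nat.choose (2 * n + 1) (2 * j) % 2 = Nat.choose n j % 2 := by
  rw [lucas2]
  simp [Nat.mul_mod_right, Nat.add_mul_mod_self_left, Nat.mul_add_div, Nat.mul_div_cancel_left]

lemma c4 (n j : ℕ) : Nat.choose (2 * n + 1) (2 * j + 1) % 2 = Nat.choose n j % 2 := by
  rw [lucas2]
  have h1 : (2 * j + 1) % 2 = 1 := by omega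
  have h2 : (2 * n + 1) % 2 = 1 := by omega
  have h3 : (2 * j + 1) / 2 = j := by omega
  have h4 : (2 * n + 1) / 2 = n := by omega
  simp [h1, h2, h3, h4]

theorem stmt3 (n : ℕ) : a (2 * n + 1) = 3 * a (2 * n) := by
  have ha : a (2 * n) = ∑ j ∈ Finset.range (n + 1), (Nat.choose n j % 2) * 4 ^ j := by
    have hext : a (2 * n) = ∑ k ∈ Finset.range (2 * (n + 1)), (Nat.choose (2 * n) k % 2) * 2 ^ k := by
      have : 2 * (n + 1) = (2 * n + 1) + 1 := by ring
      rw [this, Finset.sum_range_succ, Nat.choose_eq_zero_of_lt (by omega)]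
      simp [a]
    rw [hext, sum_even_odd]
    refine Finset.sum_congr rfl fun j _ => ?_
    rw [c1, c2]
    have : (2:ℕ) ^ (2 * j) = 4 ^ j := by rw [pow_mul]; norm_num
    simp [this]
  have hb : a (2 * n + 1) = ∑ j ∈ Finset.range (n + 1), 3 * ((Nat.choose n j % 2) * 4 ^ j) := by
    have : (2 * n + 1) + 1 = 2 * (n + 1) := by ring
    rw [a, this, sum_even_odd]
    refine Finset.sum_congr rfl fun j _ => ?_
    rw [c3, c4]
    have h4 : (2:ℕ) ^ (2 * j) = 4 ^ j := by rw [pow_mul]; norm_num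
    rw [pow_succ, h4]
    ring
  rw [ha, hb, Finset.mul_sum]
end

section
/- For every integer D and every n ≥ 0, Σ_{k=0}^{⌊n/2⌋} D^k · C(n, 2k+1) equals the coefficient of x^n in the rational power series x/(1 - 2x + (1-D)x^2). -/
open Finset PowerSeries

private def sa (D : ℚ) (n : ℕ) : ℚ := ∑ k ∈ range (n + 1), D ^ k * Nat.choose n (2 * k + 1)
private def sc (D : ℚ) (n : ℕ) : ℚ := ∑ k ∈ range (n + 1), D ^ k * Nat.choose n (2 * k)

private lemma sa_succ (D : ℚ) (n : ℕ) : sa D (n + 1) = sc D n + sa D n := by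
  unfold sa sc
  rw [← Finset.sum_add_distrib]
  rw [show range (n + 2) = range (n + 1 + 1) from rfl, Finset.sum_range_succ]
  have : (Nat.choose (n + 1) (2 * (n + 1) + 1) : ℚ) = 0 := by
    norm_cast; apply Nat.choose_eq_zero_of_lt; omega
  rw [this, mul_zero, add_zero]
  apply Finset.sum_congr rfl
  intro k _
  have : Nat.choose (n + 1) (2 * k + 1) = Nat.choose n (2 * k) + Nat.choose n (2 * k + 1) :=
    Nat.choose_succ_succ n (2 * k)
  rw [this]; push_cast; ring

private lemma sc_succ (D : ℚ) (n : ℕ) : sc D (n + 1) = sc D n + D * sa D n := by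
  unfold sa sc
  have h1 : ∑ k ∈ range (n + 2), D ^ k * Nat.choose (n + 1) (2 * k) =
      1 + ∑ j ∈ range (n + 1), D ^ (j + 1) * Nat.choose (n + 1) (2 * (j + 1)) := by
    rw [Finset.sum_range_succ']; simp [add_comm]
  have h2 : ∑ k ∈ range (n + 1), D ^ k * Nat.choose n (2 * k) =
      1 + ∑ j ∈ range (n + 1), D ^ (j + 1) * Nat.choose n (2 * (j + 1)) := by
    rw [show range (n + 1 + 1) = range (n + 2) from rfl] at *
    have : ∑ k ∈ range (n + 2), D ^ k * Nat.choose n (2 * k) =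
        ∑ k ∈ range (n + 1), D ^ k * Nat.choose n (2 * k) + D ^ (n+1) * Nat.choose n (2*(n+1)) :=
      Finset.sum_range_succ _ _
    have hz : (Nat.choose n (2 * (n + 1)) : ℚ) = 0 := by
      norm_cast; apply Nat.choose_eq_zero_of_lt; omega
    rw [hz, mul_zero, add_zero] at this
    rw [← this, Finset.sum_range_succ']; simp [add_comm]
  rw [h1, h2, Finset.mul_sum]
  rw [add_assoc, ← Finset.sum_add_distrib]
  congr 1
  apply Finset.sum_congr rfl
  intro j _
  have : Nat.choose (n + 1) (2 * (j + 1)) = Nat.choose n (2 * j + 1) + Nat.choose n (2 * j + 2) :=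
    Nat.choose_succ_succ n (2 * j + 1)
  rw [show 2 * (j + 1) = 2 * j + 2 from by ring] at *
  rw [this]; push_cast; ring

private lemma sa_rec (D : ℚ) (n : ℕ) : sa D (n + 2) = 2 * sa D (n + 1) - (1 - D) * sa D n := by
  rw [sa_succ, sc_succ, sa_succ]; ring

theorem stmt4 (D : ℤ) (n : ℕ) :
    (∑ k ∈ Finset.range (n / 2 + 1), (D : ℚ) ^ k * Nat.choose n (2 * k + 1)) =
      PowerSeries.coeff (R := ℚ) n
        ((PowerSeries.X : PowerSeries ℚ) *
          (1 - 2 * PowerSeries.X + PowerSeries.C (R := ℚ) (1 - (D : ℚ)) * PowerSeries.X ^ 2)⁻¹) := by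
  set g : PowerSeries ℚ := 1 - 2 * PowerSeries.X + PowerSeries.C (R := ℚ) (1 - (D : ℚ)) * PowerSeries.X ^ 2 with hg
  have hc : constantCoeff (R := ℚ) g ≠ 0 := by
    rw [hg]; simp
  set f : PowerSeries ℚ := PowerSeries.mk (sa (D : ℚ)) with hf
  have key : f * g = PowerSeries.X := by
    obtain ⟨c, hcd⟩ : ∃ c : ℚ, (1 - (D:ℚ)) = c := ⟨_, rfl⟩
    have expand : f * g = f - (PowerSeries.C (R := ℚ) 2) * (f * PowerSeries.X) +
        (PowerSeries.C (R := ℚ) c) * (f * PowerSeries.X ^ 2) := by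
      rw [hg, hcd]
      have h2 : (PowerSeries.C (R := ℚ)) 2 = 2 := map_ofNat (PowerSeries.C (R := ℚ)) 2
      rw [h2]; ring
    ext m
    rw [expand]
    simp only [map_add, map_sub, PowerSeries.coeff_C_mul]
    match m with
    | 0 =>
      simp [hf, sa]
    | 1 =>
      rw [PowerSeries.coeff_succ_mul_X, PowerSeries.coeff_mul_X_pow' f 2 1]
      norm_num
      simp [hf, sa, Finset.sum_range_succ, show Nat.choose 1 3 = 0 from rfl]
    | (k + 2) =>
      rw [show k + 2 = (k + 1) + 1 from rfl, PowerSeries.coeff_succ_mul_X,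
        show (k + 1) + 1 = k + 2 from rfl, PowerSeries.coeff_mul_X_pow f 2 k]
      simp only [hf, PowerSeries.coeff_mk, PowerSeries.coeff_X]
      rw [sa_rec, ← hcd]
      have : k + 2 ≠ 1 := by omega
      simp [this]
  have hinv : f = (PowerSeries.X : PowerSeries ℚ) * g⁻¹ := by
    rw [PowerSeries.eq_mul_inv_iff_mul_eq hc]; exact key
  rw [← hinv, hf, PowerSeries.coeff_mk]
  unfold sa
  rw [← Finset.sum_subset (Finset.range_subset_range.2 (by omega : n / 2 + 1 ≤ n + 1))]
  intro k hk hk2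
  simp only [Finset.mem_range] at hk hk2
  have : Nat.choose n (2 * k + 1) = 0 := by apply Nat.choose_eq_zero_of_lt; omega
  rw [this]; simp
end

section
/- For all n ≥ 0, Σ_{k=0}^{n+1} (k+1)·[C(2n+1,k) - C(2n+1,k-1)] = ((n+2)/2)·C(2n+2,n+1) - 4^n. -/
lemma tele (g : ℕ → ℚ) : ∀ m : ℕ,
    (∑ k ∈ Finset.range (m + 1), ((k : ℚ) + 1) *
        (g k - if k = 0 then 0 else g (k - 1))) =
      ((m : ℚ) + 1) * g m - ∑ k ∈ Finset.range m, g k := by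
  intro m
  induction m with
  | zero => simp
  | succ m ih =>
      rw [Finset.sum_range_succ, ih, Finset.sum_range_succ]
      simp only [Nat.succ_ne_zero, if_false, Nat.add_sub_cancel]
      push_cast
      ring

theorem stmt5 (n : ℕ) :
    (∑ k ∈ Finset.range (n + 2), ((k : ℚ) + 1) *
        ((Nat.choose (2 * n + 1) k : ℚ) - if k = 0 then 0 else (Nat.choose (2 * n + 1) (k - 1) : ℚ))) =
      ((n : ℚ) + 2) / 2 * Nat.choose (2 * n + 2) (n + 1) - 4 ^ n := by
  have h := tele (fun k => (Nat.choose (2 * n + 1) k : ℚ)) (n + 1)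
  rw [show n + 2 = n + 1 + 1 from rfl, h]
  have hsum : (∑ k ∈ Finset.range (n + 1), (Nat.choose (2 * n + 1) k : ℚ)) = 4 ^ n := by
    have := Nat.sum_range_choose_halfway n
    exact_mod_cast congrArg (Nat.cast : ℕ → ℚ) this
  have hch : Nat.choose (2 * n + 2) (n + 1) = 2 * Nat.choose (2 * n + 1) (n + 1) := by
    have h1 : Nat.choose (2 * n + 1 + 1) (n + 1) =
        Nat.choose (2 * n + 1) n + Nat.choose (2 * n + 1) (n + 1) :=
      Nat.choose_succ_succ _ _
    have h2 : Nat.choose (2 * n + 1) (n + 1) = Nat.choose (2 * n + 1) n :=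
      Nat.choose_symm_half n
    rw [show 2*n+2 = 2*n+1+1 from rfl, h1, h2]; ring
  rw [hsum, hch]
  push_cast
  ring
end

section
/- For every n ≥ 1, the number of cubic residues modulo 8^n equals (4·8^n + 3)/7. -/
open Finset

-- every unit is a cube when totient is coprime to 3
lemma units_cube {N : ℕ} [NeZero N] (h : (Nat.totient N).Coprime 3) (x : ZMod N)
    (hx : IsUnit x) : ∃ y : ZMod N, y ^ 3 = x := by
  have hcard : Nat.card (ZMod N)ˣ = Nat.totient N := by
    rw [Nat.card_eq_fintype_card, ZMod.card_units_eq_totient]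
  obtain ⟨u, hu⟩ := hx
  obtain ⟨v, hv⟩ := (Nat.Coprime.pow_left_bijective (by rw [hcard]; exact h)).surjective u
  exact ⟨v, by rw [← hu, ← hv, Units.val_pow_eq_pow_val]⟩

lemma key_step (k : ℕ) :
    ((Finset.univ : Finset (ZMod (8 ^ (k+1)))).image (fun x => x ^ 3)).card =
      4 * 8 ^ k + ((Finset.univ : Finset (ZMod (8 ^ k))).image (fun x => x ^ 3)).card := by
  haveI hM : NeZero ((8:ℕ) ^ k) := ⟨pow_ne_zero _ (by norm_num)⟩
  haveI hN : NeZero ((8:ℕ) ^ (k+1)) := ⟨pow_ne_zero _ (by norm_num)⟩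
  set N := (8:ℕ) ^ (k+1) with hNdef
  set M := (8:ℕ) ^ k with hMdef
  have hdvd : M ∣ N := pow_dvd_pow 8 (Nat.le_succ k)
  set c : ZMod N →+* ZMod M := ZMod.castHom hdvd (ZMod M) with hc
  set g : ZMod M → ZMod N := fun z => 8 * ((z.val : ℕ) : ZMod N) with hg
  -- key identity : g (c w) = 8 * w
  have hkey : ∀ w : ZMod N, g (c w) = 8 * w := by
    intro w
    have hval : (c w).val = w.val % M := by
      rw [hc, ZMod.castHom_apply, ← ZMod.natCast_val w, ZMod.val_natCast]
    rw [hg]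
    dsimp only
    rw [hval]
    have hNM : N = 8 * M := by rw [hNdef, hMdef, pow_succ]; ring
    have hnat : (8 * (w.val % M) + N * (w.val / M) : ℕ) = 8 * w.val := by
      generalize w.val = a
      rw [hNM]
      conv_rhs => rw [← Nat.mod_add_div a M]
      ring
    have h0 : ((N : ℕ) : ZMod N) = 0 := ZMod.natCast_self N
    have := congrArg (fun t : ℕ => (t : ZMod N)) hnat
    push_cast at this
    rw [h0] at this
    simp only [zero_mul, add_zero] at this
    rw [this, ZMod.natCast_val, ZMod.cast_id]
  have hg_inj : Function.Injective g := by
    intro z1 z2 h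
    rw [hg] at h
    dsimp only at h
    have hlt1 : 8 * z1.val < N := by have := ZMod.val_lt z1; omega
    have hlt2 : 8 * z2.val < N := by have := ZMod.val_lt z2; omega
    have h' : ((8 * z1.val : ℕ) : ZMod N) = ((8 * z2.val : ℕ) : ZMod N) := by
      push_cast; exact h
    have h'' := congrArg ZMod.val h'
    rw [ZMod.val_natCast_of_lt hlt1, ZMod.val_natCast_of_lt hlt2] at h''
    exact ZMod.val_injective M (by omega)
  have hNeq : N = 2 ^ (3 * (k+1)) := by
    rw [hNdef, show (8:ℕ) = 2^3 by norm_num, ← pow_mul]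
  have hodd_unit : ∀ x : ZMod N, IsUnit x ↔ ¬ 2 ∣ x.val := by
    intro x
    have hx : ((x.val : ℕ) : ZMod N) = x := by rw [ZMod.natCast_val, ZMod.cast_id]
    have h1 : IsUnit x ↔ Nat.Coprime x.val N := by
      conv_lhs => rw [← hx]
      exact ZMod.isUnit_iff_coprime _ _
    rw [h1]
    generalize x.val = a
    rw [hNeq, Nat.coprime_pow_right_iff (by omega : 0 < 3 * (k+1)),
      Nat.coprime_comm, Nat.Prime.coprime_iff_not_dvd Nat.prime_two]
  have hgval : ∀ z : ZMod M, (g z).val = 8 * z.val := by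
    intro z
    have hlt : 8 * z.val < N := by have := ZMod.val_lt z; omega
    rw [hg]
    dsimp only
    rw [show (8 : ZMod N) * ((z.val : ℕ) : ZMod N) = ((8 * z.val : ℕ) : ZMod N) by
      push_cast; ring, ZMod.val_natCast_of_lt hlt]
  have hgnonunit : ∀ z : ZMod M, ¬ IsUnit (g z) := by
    intro z hz
    rw [hodd_unit, hgval] at hz
    omega
  have htot : Nat.totient N = 4 * 8 ^ k := by
    rw [hNeq, Nat.totient_prime_pow Nat.prime_two (by omega : 0 < 3 * (k+1)),
      show 3 * (k+1) - 1 = 2 + 3 * k by omega,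
      show (8:ℕ) = 2^3 by norm_num, ← pow_mul, pow_add]
    norm_num
  have hcop : (Nat.totient N).Coprime 3 := by
    rw [htot]
    exact Nat.Coprime.mul (by decide) (Nat.Coprime.pow_left k (by decide))
  have hset : (univ : Finset (ZMod N)).image (fun x => x ^ 3) =
      (univ.filter IsUnit) ∪ ((univ : Finset (ZMod M)).image (fun x => x ^ 3)).image g := by
    ext x
    simp only [mem_image, mem_union, mem_filter, mem_univ, true_and]
    constructor
    · rintro ⟨y, rfl⟩
      by_cases hy : IsUnit y
      · exact Or.inl (hy.pow 3)
      · right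
        rw [hodd_unit] at hy
        push_neg at hy
        obtain ⟨t, ht⟩ := hy
        have hy2 : y = 2 * ((t : ℕ) : ZMod N) := by
          have hv : ((y.val : ℕ) : ZMod N) = y := by rw [ZMod.natCast_val, ZMod.cast_id]
          rw [← hv, ht]; push_cast; ring
        refine ⟨(c ((t:ℕ):ZMod N))^3, ⟨c ((t:ℕ):ZMod N), rfl⟩, ?_⟩
        rw [← map_pow, hkey, hy2]
        ring
    · rintro (hx | ⟨z, ⟨w, rfl⟩, rfl⟩)
      · obtain ⟨y, hy⟩ := units_cube hcop x hx
        exact ⟨y, hy⟩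
      · refine ⟨2 * ((w.val : ℕ) : ZMod N), ?_⟩
        have hcw : c ((w.val : ℕ) : ZMod N) = w := by
          rw [map_natCast, ZMod.natCast_val, ZMod.cast_id]
        calc (2 * ((w.val : ℕ) : ZMod N))^3 = 8 * ((w.val : ℕ) : ZMod N)^3 := by ring
          _ = g (c (((w.val : ℕ) : ZMod N)^3)) := (hkey _).symm
          _ = g (w^3) := by rw [map_pow, hcw]
  have hdisj : Disjoint (univ.filter (IsUnit (M := ZMod N)))
      (((univ : Finset (ZMod M)).image (fun x => x ^ 3)).image g) := by
    rw [Finset.disjoint_left]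
    intro x hx hx'
    simp only [mem_filter, mem_univ, true_and] at hx
    simp only [mem_image] at hx'
    obtain ⟨z, -, rfl⟩ := hx'
    exact hgnonunit z hx
  rw [hset, Finset.card_union_of_disjoint hdisj, Finset.card_image_of_injective _ hg_inj]
  congr 1
  have hcardu : (univ.filter (IsUnit (M := ZMod N))).card = Fintype.card (ZMod N)ˣ := by
    rw [Fintype.card]
    refine (Finset.card_bij (fun (u : (ZMod N)ˣ) _ => (u : ZMod N)) ?_ ?_ ?_).symm
    · intro u _; simp [Units.isUnit]
    · intro u _ v _ h; exact Units.ext h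
    · intro x hx
      simp only [mem_filter, mem_univ, true_and] at hx
      exact ⟨hx.unit, mem_univ _, rfl⟩
  rw [hcardu, ZMod.card_units_eq_totient, htot]

lemma aux_all (n : ℕ) :
    7 * ((Finset.univ : Finset (ZMod (8 ^ n))).image (fun x => x ^ 3)).card =
      4 * 8 ^ n + 3 := by
  induction n with
  | zero =>
      have h1 : ((Finset.univ : Finset (ZMod (8 ^ 0))).image (fun x => x ^ 3)).card = 1 := by
        show ((Finset.univ : Finset (ZMod 1)).image (fun x => x ^ 3)).card = 1
        decide
      rw [h1]
      norm_num
  | succ k ih =>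
      rw [key_step k, Nat.mul_add, ih, pow_succ]
      ring

theorem stmt7 (n : ℕ) (hn : 1 ≤ n) :
    7 * ((Finset.univ : Finset (ZMod (8 ^ n))).image (fun x => x ^ 3)).card =
      4 * 8 ^ n + 3 := aux_all n
end

section
/- For all n ≥ 0, lcm(3n+1, 3n+2, 3n+3) = (3/4)·(9n^3 + 18n^2 + 11n + 2)·(3 + (-1)^n). -/
lemma copr_succ (m : ℕ) : Nat.Coprime m (m + 1) := by
  simp [Nat.Coprime, Nat.gcd_self_add_right]

theorem stmt8 (n : ℕ) :
    (Nat.lcm (3 * n + 1) (Nat.lcm (3 * n + 2) (3 * n + 3)) : ℚ) =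
      3 / 4 * (9 * (n : ℚ) ^ 3 + 18 * (n : ℚ) ^ 2 + 11 * n + 2) * (3 + (-1 : ℚ) ^ n) := by
  have h23 : Nat.lcm (3 * n + 2) (3 * n + 3) = (3 * n + 2) * (3 * n + 3) := by
    apply Nat.Coprime.lcm_eq_mul
    have := copr_succ (3 * n + 2)
    simpa [Nat.add_assoc] using this
  rw [h23]
  rcases Nat.even_or_odd n with ⟨k, hk⟩ | ⟨k, hk⟩
  · subst hk
    have h12 : Nat.Coprime (3 * (k + k) + 1) (3 * (k + k) + 2) := by
      have := copr_succ (3 * (k + k) + 1)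
      simpa [Nat.add_assoc] using this
    have h13 : Nat.Coprime (3 * (k + k) + 1) (3 * (k + k) + 3) := by
      have hd : Nat.gcd (3 * (k + k) + 1) (3 * (k + k) + 3) ∣ 2 := by
        have := Nat.dvd_sub (Nat.gcd_dvd_right (3 * (k + k) + 1) (3 * (k + k) + 3))
          (Nat.gcd_dvd_left (3 * (k + k) + 1) (3 * (k + k) + 3))
        simpa using this
      have hd1 : Nat.gcd (3 * (k + k) + 1) (3 * (k + k) + 3) ∣ 3 * (k + k) + 1 :=
        Nat.gcd_dvd_left _ _
      rcases (Nat.dvd_prime Nat.prime_two).mp hd with h | h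
      · exact h
      · exfalso
        rw [h] at hd1
        omega
    have h1 : Nat.lcm (3 * (k + k) + 1) ((3 * (k + k) + 2) * (3 * (k + k) + 3)) =
        (3 * (k + k) + 1) * ((3 * (k + k) + 2) * (3 * (k + k) + 3)) :=
      Nat.Coprime.lcm_eq_mul (Nat.Coprime.mul_right h12 h13)
    rw [h1]
    have hpow : ((-1 : ℚ)) ^ (k + k) = 1 := by
      rw [← two_mul]
      simp [pow_mul]
    rw [hpow]
    push_cast
    ring
  · subst hk
    have ha : 3 * (2 * k + 1) + 1 = 2 * (3 * k + 2) := by ring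
    have hg : Nat.gcd (3 * (2 * k + 1) + 1)
        ((3 * (2 * k + 1) + 2) * (3 * (2 * k + 1) + 3)) = 2 := by
      have h12 : Nat.Coprime (3 * (2 * k + 1) + 1) (3 * (2 * k + 1) + 2) := by
        have := copr_succ (3 * (2 * k + 1) + 1)
        simpa [Nat.add_assoc] using this
      rw [Nat.Coprime.gcd_mul_left_cancel_right _ h12.symm]
      have : (3 * (2 * k + 1) + 1) = 2 * (3 * k + 2) := by ring
      have h3 : (3 * (2 * k + 1) + 3) = 2 * (3 * k + 3) := by ring
      rw [this, h3, Nat.gcd_mul_left]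
      have : Nat.Coprime (3 * k + 2) (3 * k + 3) := by
        have := copr_succ (3 * k + 2)
        simpa [Nat.add_assoc] using this
      rw [this]
    have hl : Nat.lcm (3 * (2 * k + 1) + 1)
        ((3 * (2 * k + 1) + 2) * (3 * (2 * k + 1) + 3)) =
        (3 * k + 2) * ((3 * (2 * k + 1) + 2) * (3 * (2 * k + 1) + 3)) := by
      rw [Nat.lcm, hg, ha]
      rw [mul_assoc, Nat.mul_div_cancel_left _ (by norm_num : 0 < 2)]
    rw [hl]
    have hpow : ((-1 : ℚ)) ^ (2 * k + 1) = -1 := by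
      simp [pow_succ, pow_mul]
    rw [hpow]
    push_cast
    ring
end

section
/- An odd prime p satisfies p ≡ 5 (mod 12) if and only if the congruence x^4 ≡ 9 (mod p) has no solution. -/
instance : Fact (Nat.Prime 3) := ⟨by norm_num⟩

lemma stmt10_aux0 : ((0 : ZMod 3) ^ 4 = 9) := by decide
lemma stmt10_aux1 : legendreSym 3 1 = 1 := by decide
lemma stmt10_aux2 : legendreSym 3 2 = -1 := by decide

theorem stmt10 (p : ℕ) (hp : p.Prime) (hodd : p ≠ 2) :
    p % 12 = 5 ↔ ¬ ∃ x : ZMod p, x ^ 4 = 9 := by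
  haveI : Fact p.Prime := ⟨hp⟩
  by_cases hp3 : p = 3
  · subst hp3
    constructor
    · intro h; exact absurd h (by norm_num)
    · intro h; exact absurd ⟨0, stmt10_aux0⟩ h
  -- p is a prime different from 2 and 3
  have key : (∃ x : ZMod p, x ^ 4 = 9) ↔
      IsSquare (3 : ZMod p) ∨ IsSquare (-3 : ZMod p) := by
    constructor
    · rintro ⟨x, hx⟩
      have h : (x ^ 2 - 3) * (x ^ 2 + 3) = 0 := by linear_combination hx
      rcases mul_eq_zero.mp h with h | h
      · exact Or.inl ⟨x, by linear_combination -h⟩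
      · exact Or.inr ⟨x, by linear_combination -h⟩
    · rintro (⟨r, hr⟩ | ⟨r, hr⟩)
      · exact ⟨r, by linear_combination (-(r * r + 3)) * hr⟩
      · exact ⟨r, by linear_combination (3 - r * r) * hr⟩
  have h2 : p % 2 = 1 := hp.eq_two_or_odd.resolve_left hodd
  have h3 : p % 3 ≠ 0 := fun h =>
    hp3 ((Nat.prime_dvd_prime_iff_eq (by norm_num) hp).mp
      (Nat.dvd_of_mod_eq_zero h)).symm
  have ha3 : ((3 : ℤ) : ZMod p) ≠ 0 := by
    have := ZMod.prime_ne_zero p 3 hp3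
    push_cast
    exact_mod_cast this
  have haneg3 : ((-3 : ℤ) : ZMod p) ≠ 0 := by
    push_cast
    push_cast at ha3
    exact neg_ne_zero.mpr ha3
  have hsq3 : legendreSym p 3 = 1 ↔ IsSquare (3 : ZMod p) := by
    rw [legendreSym.eq_one_iff p ha3]; norm_num
  have hsqn3 : legendreSym p (-3) = 1 ↔ IsSquare (-3 : ZMod p) := by
    rw [legendreSym.eq_one_iff p haneg3]; norm_num
  have hns3 : legendreSym p 3 = -1 ↔ ¬ IsSquare (3 : ZMod p) := by
    rw [legendreSym.eq_neg_one_iff p]; norm_num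
  have hnsn3 : legendreSym p (-3) = -1 ↔ ¬ IsSquare (-3 : ZMod p) := by
    rw [legendreSym.eq_neg_one_iff p]; norm_num
  have hmul : legendreSym p (-3) = legendreSym p (-1) * legendreSym p 3 := by
    rw [← legendreSym.mul]; norm_num
  have h12 : p % 12 = 1 ∨ p % 12 = 5 ∨ p % 12 = 7 ∨ p % 12 = 11 := by omega
  rcases h12 with h | h | h | h
  · -- p ≡ 1 mod 12 : 3 is a square
    have h4 : p % 4 = 1 := by omega
    have e1 : legendreSym 3 (p : ℤ) = legendreSym p 3 :=
      legendreSym.quadratic_reciprocity_one_mod_four h4 (by norm_num)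
    have e2 : legendreSym 3 (p : ℤ) = 1 := by
      rw [legendreSym.mod, show ((p : ℤ) % (3 : ℕ)) = 1 by omega]
      exact stmt10_aux1
    rw [key]
    exact iff_of_false (by omega)
      (fun hn => hn (Or.inl (hsq3.mp (e1 ▸ e2))))
  · -- p ≡ 5 mod 12 : neither 3 nor -3 is a square
    have h4 : p % 4 = 1 := by omega
    have e1 : legendreSym 3 (p : ℤ) = legendreSym p 3 :=
      legendreSym.quadratic_reciprocity_one_mod_four h4 (by norm_num)
    have e2 : legendreSym 3 (p : ℤ) = -1 := by
      rw [legendreSym.mod, show ((p : ℤ) % (3 : ℕ)) = 2 by omega]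
      exact stmt10_aux2
    have e3 : legendreSym p 3 = -1 := e1 ▸ e2
    have e4 : legendreSym p (-1) = 1 := by
      rw [legendreSym.at_neg_one hodd, ZMod.χ₄_nat_one_mod_four h4]
    have e5 : legendreSym p (-3) = -1 := by rw [hmul, e3, e4]; ring
    rw [key]
    exact iff_of_true h (by
      rintro (hs | hs)
      · exact (hns3.mp e3) hs
      · exact (hnsn3.mp e5) hs)
  · -- p ≡ 7 mod 12 : -3 is a square
    have h4 : p % 4 = 3 := by omega
    have e1 : legendreSym 3 (p : ℤ) = -legendreSym p 3 :=
      legendreSym.quadratic_reciprocity_three_mod_four h4 (by norm_num)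
    have e2 : legendreSym 3 (p : ℤ) = 1 := by
      rw [legendreSym.mod, show ((p : ℤ) % (3 : ℕ)) = 1 by omega]
      exact stmt10_aux1
    have e3 : legendreSym p 3 = -1 := by omega
    have e4 : legendreSym p (-1) = -1 := by
      rw [legendreSym.at_neg_one hodd, ZMod.χ₄_nat_three_mod_four h4]
    have e5 : legendreSym p (-3) = 1 := by rw [hmul, e3, e4]; ring
    rw [key]
    exact iff_of_false (by omega)
      (fun hn => hn (Or.inr (hsqn3.mp e5)))
  · -- p ≡ 11 mod 12 : 3 is a square
    have h4 : p % 4 = 3 := by omega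
    have e1 : legendreSym 3 (p : ℤ) = -legendreSym p 3 :=
      legendreSym.quadratic_reciprocity_three_mod_four h4 (by norm_num)
    have e2 : legendreSym 3 (p : ℤ) = -1 := by
      rw [legendreSym.mod, show ((p : ℤ) % (3 : ℕ)) = 2 by omega]
      exact stmt10_aux2
    have e3 : legendreSym p 3 = 1 := by omega
    rw [key]
    exact iff_of_false (by omega)
      (fun hn => hn (Or.inl (hsq3.mp e3)))
end

section
/- A positive integer n has a cube n^3 expressible as a sum of two nonzero squares if and only if n itself is expressible as a sum of two nonzero squares. -/
private lemma odd_sq_mod_four {a : ℕ} (ha : a % 2 = 1) : a ^ 2 % 4 = 1 := by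
  obtain ⟨k, rfl⟩ : ∃ k, a = 2 * k + 1 := ⟨a / 2, by omega⟩
  have h : (2 * k + 1) ^ 2 = 4 * (k * k + k) + 1 := by ring
  omega

/-- Given a prime `p = u^2+v^2` with `0 < v < u` and `p ∣ t`, `0 < t`, `t^2` is a sum of
two nonzero squares. -/
private lemma sq_sum_of_lt {p u v t : ℕ} (hv : 0 < v) (huv : v < u)
    (hp : u ^ 2 + v ^ 2 = p) (hpt : p ∣ t) (ht : 0 < t) :
    ∃ a b : ℕ, 0 < a ∧ 0 < b ∧ t ^ 2 = a ^ 2 + b ^ 2 := by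
  obtain ⟨s, rfl⟩ := hpt
  have hs : 0 < s := by
    rcases Nat.eq_zero_or_pos s with rfl | h
    · simp at ht
    · exact h
  have hu : 0 < u := lt_trans hv huv
  have hvu : v ^ 2 ≤ u ^ 2 := by nlinarith
  set w := u ^ 2 - v ^ 2 with hwdef
  have hw : w + v ^ 2 = u ^ 2 := Nat.sub_add_cancel hvu
  have hw0 : 0 < w := by nlinarith
  refine ⟨w * s, 2 * u * v * s, Nat.mul_pos hw0 hs,
    Nat.mul_pos (Nat.mul_pos (Nat.mul_pos two_pos hu) hv) hs, ?_⟩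
  have key : p ^ 2 = w ^ 2 + (2 * u * v) ^ 2 := by nlinarith [hw, hp]
  calc (p * s) ^ 2 = p ^ 2 * s ^ 2 := by ring
    _ = (w ^ 2 + (2 * u * v) ^ 2) * s ^ 2 := by rw [key]
    _ = (w * s) ^ 2 + (2 * u * v * s) ^ 2 := by ring

/-- A square `t^2` (with `t > 0`) divisible by a prime `p ≡ 1 mod 4` is a sum of two
nonzero squares. -/
private lemma sq_sum_of_prime_one_mod_four {p t : ℕ} (hp : p.Prime) (hp4 : p % 4 = 1)
    (hpt : p ∣ t) (ht : 0 < t) :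
    ∃ a b : ℕ, 0 < a ∧ 0 < b ∧ t ^ 2 = a ^ 2 + b ^ 2 := by
  haveI : Fact p.Prime := ⟨hp⟩
  obtain ⟨u, v, huv⟩ := Nat.Prime.sq_add_sq (p := p) (by omega)
  have hp2 : 2 ≤ p := hp.two_le
  have hu : 0 < u := by
    rcases Nat.eq_zero_or_pos u with rfl | h
    · exfalso
      simp only [pow_two] at huv
      have hvdvd : v ∣ p := ⟨v, by omega⟩
      rcases (hp.eq_one_or_self_of_dvd v hvdvd) with h1 | h1
      · subst h1; omega
      · subst h1; nlinarith
    · exact h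
  have hv : 0 < v := by
    rcases Nat.eq_zero_or_pos v with rfl | h
    · exfalso
      simp only [pow_two] at huv
      have hudvd : u ∣ p := ⟨u, by omega⟩
      rcases (hp.eq_one_or_self_of_dvd u hudvd) with h1 | h1
      · subst h1; omega
      · subst h1; nlinarith
    · exact h
  have hne : u ≠ v := by
    rintro rfl
    have h2p : 2 ∣ p := ⟨u ^ 2, by omega⟩
    have := Nat.le_of_dvd (by omega) h2p
    omega
  rcases Nat.lt_or_ge v u with h | h
  · exact sq_sum_of_lt hv h huv hpt ht
  · exact sq_sum_of_lt hu (lt_of_le_of_ne h hne) (by omega) hpt ht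

/-- Characterization of sums of two nonzero squares. -/
private lemma char_sq_sum {m : ℕ} (hm : 0 < m) :
    (∃ a b : ℕ, 0 < a ∧ 0 < b ∧ m = a ^ 2 + b ^ 2) ↔
      (∀ q : ℕ, q.Prime → q % 4 = 3 → Even (padicValNat q m)) ∧
      ((∃ p : ℕ, p.Prime ∧ p % 4 = 1 ∧ p ∣ m) ∨ Odd (padicValNat 2 m)) := by
  haveI : Fact (Nat.Prime 2) := ⟨Nat.prime_two⟩
  constructor
  · rintro ⟨a, b, ha, hb, hab⟩
    refine ⟨fun q hq h3 => by
      by_cases hd : q ∣ m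
      · exact Nat.eq_sq_add_sq_iff.mp ⟨a, b, hab⟩ q (Nat.mem_primeFactors.mpr ⟨hq, hd, hm.ne'⟩) h3
      · rw [padicValNat.eq_zero_of_not_dvd hd]; exact Even.zero, ?_⟩
    by_cases hp1 : ∃ p : ℕ, p.Prime ∧ p % 4 = 1 ∧ p ∣ m
    · exact Or.inl hp1
    right
    push_neg at hp1
    set g := Nat.gcd a b with hgdef
    have hg0 : 0 < g := Nat.gcd_pos_of_pos_left _ ha
    set a' := a / g with ha'def
    set b' := b / g with hb'def
    have hcop : Nat.Coprime a' b' := Nat.coprime_div_gcd_div_gcd hg0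
    have haa : a = g * a' := (Nat.mul_div_cancel' (Nat.gcd_dvd_left a b)).symm
    have hbb : b = g * b' := (Nat.mul_div_cancel' (Nat.gcd_dvd_right a b)).symm
    have ha' : 0 < a' := by
      rcases Nat.eq_zero_or_pos a' with h | h
      · rw [h, mul_zero] at haa; omega
      · exact h
    have hb' : 0 < b' := by
      rcases Nat.eq_zero_or_pos b' with h | h
      · rw [h, mul_zero] at hbb; omega
      · exact h
    set c := a' ^ 2 + b' ^ 2 with hcdef
    have hmc : m = g ^ 2 * c := by rw [hab, haa, hbb, hcdef]; ring
    have hcm : c ∣ m := ⟨g ^ 2, by rw [hmc]; ring⟩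
    have hsq : IsSquare (-1 : ZMod c) :=
      ZMod.isSquare_neg_one_of_eq_sq_add_sq_of_coprime rfl hcop
    have hc2 : 2 ≤ c := by
      have h1 : 1 ≤ a' ^ 2 := Nat.one_le_pow _ _ ha'
      have h2 : 1 ≤ b' ^ 2 := Nat.one_le_pow _ _ hb'
      omega
    -- every prime factor of c is 2
    have honly2 : ∀ q : ℕ, q.Prime → q ∣ c → q = 2 := by
      intro q hq hqc
      by_contra hq2
      have hqodd : q % 2 = 1 := hq.eq_two_or_odd.resolve_left hq2
      have hq3 : q % 4 ≠ 3 :=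
        Nat.mod_four_ne_three_of_mem_primeFactors_of_isSquare_neg_one
          (Nat.mem_primeFactors.mpr ⟨hq, hqc, by omega⟩) hsq
      have hq41 : q % 4 = 1 := by omega
      exact (hp1 q hq hq41) (hqc.trans hcm)
    have h2c : 2 ∣ c := by
      have hmf := Nat.minFac_prime (n := c) (by omega)
      have := honly2 _ hmf (Nat.minFac_dvd c)
      rw [← this]
      exact Nat.minFac_dvd c
    -- a' and b' are both odd
    have hodd : a' % 2 = 1 ∧ b' % 2 = 1 := by
      rcases Nat.even_or_odd a' with hae | hae <;>
        rcases Nat.even_or_odd b' with hbe | hbe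
      · exfalso
        have h2 : 2 ∣ Nat.gcd a' b' := Nat.dvd_gcd hae.two_dvd hbe.two_dvd
        rw [hcop.gcd_eq_one] at h2
        norm_num at h2
      · exfalso
        obtain ⟨k, hk⟩ := hae
        have hb2 : b' ^ 2 % 2 = 1 := by
          have := odd_sq_mod_four (Nat.odd_iff.mp hbe); omega
        have ha2 : a' ^ 2 % 2 = 0 := by
          have h : a' ^ 2 = 2 * (2 * k * k) := by rw [hk]; ring
          omega
        obtain ⟨l, hl⟩ := h2c
        rw [hcdef] at hl
        omega
      · exfalso
        obtain ⟨k, hk⟩ := hbe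
        have ha2 : a' ^ 2 % 2 = 1 := by
          have := odd_sq_mod_four (Nat.odd_iff.mp hae); omega
        have hb2 : b' ^ 2 % 2 = 0 := by
          have h : b' ^ 2 = 2 * (2 * k * k) := by rw [hk]; ring
          omega
        obtain ⟨l, hl⟩ := h2c
        rw [hcdef] at hl
        omega
      · exact ⟨Nat.odd_iff.mp hae, Nat.odd_iff.mp hbe⟩
    have hc4 : c % 4 = 2 := by
      have h1 := odd_sq_mod_four hodd.1
      have h2 := odd_sq_mod_four hodd.2
      omega
    -- in fact c = 2
    have hc : c = 2 := by
      by_contra hcne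
      set d := c / 2 with hddef
      have hcd : c = 2 * d := by omega
      have hd1 : d ≠ 1 := by omega
      have hdodd : d % 2 = 1 := by omega
      have hmf := Nat.minFac_prime (n := d) hd1
      have hmfd : d.minFac ∣ c := (Nat.minFac_dvd d).trans ⟨2, by omega⟩
      have h2d : d.minFac = 2 := honly2 _ hmf hmfd
      have : (2 : ℕ) ∣ d := h2d ▸ Nat.minFac_dvd d
      omega
    have hm2 : m = 2 * g ^ 2 := by rw [hmc, hc]; ring
    rw [hm2, padicValNat.mul (by norm_num) (by positivity),
      padicValNat.self (by norm_num), padicValNat.pow _ 2]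
    exact ⟨padicValNat 2 g, by ring⟩
  · rintro ⟨heven, hrest⟩
    obtain ⟨x, y, hxy⟩ := Nat.eq_sq_add_sq_iff.mpr fun q hq h3 => heven q (Nat.prime_of_mem_primeFactors hq) h3
    rcases Nat.eq_zero_or_pos x with rfl | hx
    · -- m = y^2
      rw [zero_pow (by norm_num), zero_add] at hxy
      have hy : 0 < y := by
        rcases Nat.eq_zero_or_pos y with rfl | h
        · simp at hxy; omega
        · exact h
      rcases hrest with ⟨p, hp, hp4, hpm⟩ | hoddv
      · exact hxy ▸ sq_sum_of_prime_one_mod_four hp hp4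
          (hp.dvd_of_dvd_pow (hxy ▸ hpm)) hy
      · exfalso
        rw [hxy, padicValNat.pow _ 2] at hoddv
        rw [Nat.odd_iff] at hoddv
        omega
    rcases Nat.eq_zero_or_pos y with rfl | hy
    · rw [zero_pow (by norm_num), add_zero] at hxy
      rcases hrest with ⟨p, hp, hp4, hpm⟩ | hoddv
      · exact hxy ▸ sq_sum_of_prime_one_mod_four hp hp4
          (hp.dvd_of_dvd_pow (hxy ▸ hpm)) hx
      · exfalso
        rw [hxy, padicValNat.pow _ 2] at hoddv
        rw [Nat.odd_iff] at hoddv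
        omega
    exact ⟨x, y, hx, hy, hxy⟩

theorem stmt13 (n : ℕ) (hn : 0 < n) :
    (∃ a b : ℕ, 0 < a ∧ 0 < b ∧ n ^ 3 = a ^ 2 + b ^ 2) ↔
      (∃ a b : ℕ, 0 < a ∧ 0 < b ∧ n = a ^ 2 + b ^ 2) := by
  have hn3 : 0 < n ^ 3 := by positivity
  rw [char_sq_sum hn3, char_sq_sum hn]
  have hval : ∀ q : ℕ, q.Prime → padicValNat q (n ^ 3) = 3 * padicValNat q n := by
    intro q hq
    haveI : Fact q.Prime := ⟨hq⟩
    exact padicValNat.pow _ 3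
  constructor
  · rintro ⟨h1, h2⟩
    refine ⟨fun q hq h3 => ?_, ?_⟩
    · have := h1 q hq h3
      rw [hval q hq, Nat.even_iff] at this
      rw [Nat.even_iff]; omega
    · rcases h2 with ⟨p, hp, hp4, hpd⟩ | hodd
      · exact Or.inl ⟨p, hp, hp4, hp.dvd_of_dvd_pow hpd⟩
      · right
        rw [hval 2 Nat.prime_two, Nat.odd_iff] at hodd
        rw [Nat.odd_iff]; omega
  · rintro ⟨h1, h2⟩
    refine ⟨fun q hq h3 => ?_, ?_⟩
    · have := h1 q hq h3
      rw [Nat.even_iff] at this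
      rw [hval q hq, Nat.even_iff]; omega
    · rcases h2 with ⟨p, hp, hp4, hpd⟩ | hodd
      · exact Or.inl ⟨p, hp, hp4, dvd_pow hpd (by norm_num)⟩
      · right
        rw [Nat.odd_iff] at hodd
        rw [hval 2 Nat.prime_two, Nat.odd_iff]; omega
end

section
/- For every n ≥ 0, the number of distinct values among the 2-adic valuations v₂(C(n,j)) for 0 ≤ j ≤ n equals ⌊log₂(n+1)⌋ + 1 - v₂(n+1). -/
namespace Stmt17Aux

/-- binary digit sum -/
def s (n : ℕ) : ℕ := (Nat.digits 2 n).sum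

lemma s_zero : s 0 = 0 := by simp [s]

lemma s_one : s 1 = 1 := by simp [s]

lemma s_even (k : ℕ) : s (2 * k) = s k := by
  rcases Nat.eq_zero_or_pos k with rfl | hk
  · simp [s]
  unfold s
  rw [Nat.digits_def' (by norm_num : 1 < 2) (by positivity)]
  simp [Nat.mul_div_cancel_left, Nat.mul_mod_right]

lemma s_odd (k : ℕ) : s (2 * k + 1) = s k + 1 := by
  unfold s
  rw [Nat.digits_def' (by norm_num : 1 < 2) (by positivity)]
  simp [Nat.add_mul_div_left, Nat.add_mul_mod_self_left, add_comm]

lemma s_succ_le (n : ℕ) : s (n + 1) ≤ s n + 1 := by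
  induction n using Nat.strong_induction_on with
  | _ n ih =>
    rcases Nat.even_or_odd n with ⟨k, hk⟩ | ⟨k, hk⟩
    · subst hk
      rw [show k + k = 2 * k by ring, s_odd, s_even _]
    · subst hk
      rw [show 2 * k + 1 + 1 = 2 * (k + 1) by ring, s_even _, s_odd]
      have := ih k (by omega)
      omega

lemma s_superadd (a b : ℕ) : s (a + b) ≤ s a + s b := by
  induction a using Nat.strong_induction_on generalizing b with
  | _ a ih =>
    rcases Nat.eq_zero_or_pos a with rfl | ha
    · simp [s_zero]
    rcases Nat.eq_zero_or_pos b with rfl | hb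
    · simp [s_zero]
    rcases Nat.even_or_odd a with ⟨u, hu⟩ | ⟨u, hu⟩ <;>
      rcases Nat.even_or_odd b with ⟨v, hv⟩ | ⟨v, hv⟩ <;> subst hu hv
    · rw [show u + u + (v + v) = 2 * (u + v) by ring, s_even _,
        show u + u = 2 * u by ring, show v + v = 2 * v by ring,
        s_even _, s_even _]
      exact ih u (by omega) v
    · rw [show u + u + (2 * v + 1) = 2 * (u + v) + 1 by ring, s_odd,
        show u + u = 2 * u by ring, s_even _, s_odd]
      have := ih u (by omega) v; omega
    · rw [show 2 * u + 1 + (v + v) = 2 * (u + v) + 1 by ring, s_odd, s_odd,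
        show v + v = 2 * v by ring, s_even _]
      have := ih u (by omega) v; omega
    · rw [show 2 * u + 1 + (2 * v + 1) = 2 * (u + v + 1) by ring,
        s_even _, s_odd, s_odd]
      have h1 := ih u (by omega) (v + 1)
      rw [show u + (v + 1) = u + v + 1 by ring] at h1
      have h2 := s_succ_le v
      omega

lemma s_superadd' (a b : ℕ) : s (a + b + 1) ≤ s a + s b + 1 := by
  have h1 := s_superadd a (b + 1)
  rw [show a + (b + 1) = a + b + 1 by ring] at h1
  have h2 := s_succ_le b
  omega

/-- set of carry counts when adding j + (n - j) = n in base 2 -/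
def g (n : ℕ) : Finset ℕ :=
  (Finset.range (n + 1)).image (fun j => s j + s (n - j) - s n)

/-- set of carry counts when adding x + y + 1 = n -/
def c1 (n : ℕ) : Finset ℕ :=
  (Finset.range n).image (fun x => s x + s (n - 1 - x) + 1 - s n)

lemma g_zero : g 0 = {0} := by
  simp [g, s_zero]

lemma mem_g {n t : ℕ} : t ∈ g n ↔ ∃ j ≤ n, s j + s (n - j) - s n = t := by
  simp [g, Nat.lt_succ_iff]

lemma mem_c1 {n t : ℕ} : t ∈ c1 n ↔ ∃ x < n, s x + s (n - 1 - x) + 1 - s n = t := by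
  simp [c1]

lemma g_odd (m : ℕ) : g (2 * m + 1) = g m := by
  ext t
  rw [mem_g, mem_g]
  constructor
  · rintro ⟨j, hj, rfl⟩
    rcases Nat.even_or_odd j with ⟨i, hi⟩ | ⟨i, hi⟩
    · refine ⟨i, by omega, ?_⟩
      rw [show j = 2 * i by omega, show 2 * m + 1 - 2 * i = 2 * (m - i) + 1 by omega,
        s_odd, s_odd, s_even _]
      omega
    · refine ⟨i, by omega, ?_⟩
      rw [show j = 2 * i + 1 by omega, s_odd,
        show 2 * m + 1 - (2 * i + 1) = 2 * (m - i) by omega, s_odd, s_even _]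
      omega
  · rintro ⟨i, hi, rfl⟩
    refine ⟨2 * i, by omega, ?_⟩
    rw [show 2 * m + 1 - 2 * i = 2 * (m - i) + 1 by omega, s_odd, s_odd, s_even _]
    omega

lemma g_even (m : ℕ) (hm : m ≠ 0) :
    g (2 * m) = g m ∪ (c1 m).image (· + 1) := by
  ext t
  rw [Finset.mem_union, mem_g]
  constructor
  · rintro ⟨j, hj, rfl⟩
    rcases Nat.even_or_odd j with ⟨i, hi⟩ | ⟨x, hx⟩
    · left
      rw [mem_g]
      refine ⟨i, by omega, ?_⟩
      rw [show j = 2 * i by omega, show 2 * m - 2 * i = 2 * (m - i) by omega,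
        s_even _, s_even _, s_even _]
    · right
      simp only [Finset.mem_image]
      refine ⟨s x + s (m - 1 - x) + 1 - s m, ?_, ?_⟩
      · rw [mem_c1]; exact ⟨x, by omega, rfl⟩
      · rw [show j = 2 * x + 1 by omega, s_odd,
          show 2 * m - (2 * x + 1) = 2 * (m - 1 - x) + 1 by omega, s_odd,
          s_even _]
        have := s_superadd' x (m - 1 - x)
        rw [show x + (m - 1 - x) + 1 = m by omega] at this
        omega
  · rintro (h | h)
    · rw [mem_g] at h
      obtain ⟨i, hi, rfl⟩ := h
      refine ⟨2 * i, by omega, ?_⟩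
      rw [show 2 * m - 2 * i = 2 * (m - i) by omega, s_even _, s_even _, s_even _]
    · simp only [Finset.mem_image] at h
      obtain ⟨w, hw, rfl⟩ := h
      rw [mem_c1] at hw
      obtain ⟨x, hx, rfl⟩ := hw
      refine ⟨2 * x + 1, by omega, ?_⟩
      rw [s_odd, show 2 * m - (2 * x + 1) = 2 * (m - 1 - x) + 1 by omega, s_odd,
        s_even _]
      have := s_superadd' x (m - 1 - x)
      rw [show x + (m - 1 - x) + 1 = m by omega] at this
      omega

lemma c1_odd (m : ℕ) : c1 (2 * m + 1) = g m ∪ (c1 m).image (· + 1) := by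
  ext t
  rw [Finset.mem_union, mem_c1]
  have key : ∀ x ≤ 2 * m, s x + s (2 * m - x) + 1 - s (2 * m + 1)
      = s x + s (2 * m - x) - s m := by
    intro x hx
    rw [s_odd]
    omega
  constructor
  · rintro ⟨x, hx, rfl⟩
    rw [show 2 * m + 1 - 1 - x = 2 * m - x by omega, key x (by omega)]
    rcases Nat.even_or_odd x with ⟨i, hi⟩ | ⟨u, hu⟩
    · left
      rw [mem_g]
      refine ⟨i, by omega, ?_⟩
      rw [show x = 2 * i by omega, show 2 * m - 2 * i = 2 * (m - i) by omega,
        s_even _, s_even _]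
    · right
      simp only [Finset.mem_image]
      refine ⟨s u + s (m - 1 - u) + 1 - s m, ?_, ?_⟩
      · rw [mem_c1]; exact ⟨u, by omega, rfl⟩
      · rw [show x = 2 * u + 1 by omega, s_odd,
          show 2 * m - (2 * u + 1) = 2 * (m - 1 - u) + 1 by omega, s_odd]
        have := s_superadd' u (m - 1 - u)
        rw [show u + (m - 1 - u) + 1 = m by omega] at this
        omega
  · rintro (h | h)
    · rw [mem_g] at h
      obtain ⟨i, hi, rfl⟩ := h
      refine ⟨2 * i, by omega, ?_⟩
      rw [show 2 * m + 1 - 1 - 2 * i = 2 * m - 2 * i by omega, key (2 * i) (by omega),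
        show 2 * m - 2 * i = 2 * (m - i) by omega, s_even _, s_even _]
    · simp only [Finset.mem_image] at h
      obtain ⟨w, hw, rfl⟩ := h
      rw [mem_c1] at hw
      obtain ⟨u, hu, rfl⟩ := hw
      refine ⟨2 * u + 1, by omega, ?_⟩
      rw [show 2 * m + 1 - 1 - (2 * u + 1) = 2 * m - (2 * u + 1) by omega,
        key (2 * u + 1) (by omega), s_odd,
        show 2 * m - (2 * u + 1) = 2 * (m - 1 - u) + 1 by omega, s_odd]
      have := s_superadd' u (m - 1 - u)
      rw [show u + (m - 1 - u) + 1 = m by omega] at this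
      omega

lemma c1_even (m : ℕ) (hm : m ≠ 0) : c1 (2 * m) = (c1 m).image (· + 1) := by
  ext t
  rw [mem_c1]
  simp only [Finset.mem_image]
  have hsup : ∀ u, u ≤ m - 1 → s m ≤ s u + s (m - 1 - u) + 1 := by
    intro u hu
    have := s_superadd' u (m - 1 - u)
    rw [show u + (m - 1 - u) + 1 = m by omega] at this
    exact this
  constructor
  · rintro ⟨x, hx, rfl⟩
    rcases Nat.even_or_odd x with ⟨u, hu⟩ | ⟨u, hu⟩
    · refine ⟨s u + s (m - 1 - u) + 1 - s m, ⟨by rw [mem_c1]; exact ⟨u, by omega, rfl⟩, ?_⟩⟩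
      rw [show x = 2 * u by omega, s_even _,
        show 2 * m - 1 - 2 * u = 2 * (m - 1 - u) + 1 by omega, s_odd]
      have := hsup u (by omega)
      rw [s_even _]
      omega
    · refine ⟨s u + s (m - 1 - u) + 1 - s m, ⟨by rw [mem_c1]; exact ⟨u, by omega, rfl⟩, ?_⟩⟩
      rw [show x = 2 * u + 1 by omega, s_odd, s_even _,
        show 2 * m - 1 - (2 * u + 1) = 2 * (m - 1 - u) by omega]
      have := hsup u (by omega)
      rw [s_even _]
      omega
  · rintro ⟨w, hw, rfl⟩
    rw [mem_c1] at hw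
    obtain ⟨u, hu, rfl⟩ := hw
    refine ⟨2 * u, by omega, ?_⟩
    rw [s_even _, show 2 * m - 1 - 2 * u = 2 * (m - 1 - u) + 1 by omega, s_odd]
    have := hsup u (by omega)
    rw [s_even _]
    omega


lemma v2_le_log {k : ℕ} (hk : k ≠ 0) : k.factorization 2 ≤ Nat.log 2 k := by
  rw [Nat.le_log_iff_pow_le one_lt_two hk]
  exact Nat.ordProj_le 2 hk

lemma v2_odd (m : ℕ) : (2 * m + 1).factorization 2 = 0 :=
  Nat.factorization_eq_zero_of_not_dvd (by omega)

lemma v2_two_mul (m : ℕ) (hm : m ≠ 0) :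
    (2 * m).factorization 2 = m.factorization 2 + 1 := by
  rw [Nat.factorization_mul two_ne_zero hm]
  simp [Nat.Prime.factorization_self Nat.prime_two, add_comm]

lemma log_two_mul (m : ℕ) (hm : m ≠ 0) : Nat.log 2 (2 * m) = Nat.log 2 m + 1 := by
  rw [mul_comm, Nat.log_mul_base one_lt_two hm]

lemma log_two_mul_add_one (m : ℕ) (hm : m ≠ 0) :
    Nat.log 2 (2 * m + 1) = Nat.log 2 m + 1 := by
  refine Nat.log_eq_of_pow_le_of_lt_pow ?_ ?_
  · have := Nat.pow_log_le_self 2 hm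
    rw [pow_succ]
    omega
  · have := Nat.lt_pow_succ_log_self one_lt_two m
    rw [pow_succ, pow_succ]
    omega

lemma v2_par (m : ℕ) (hm : m ≠ 0) :
    m.factorization 2 + (m + 1).factorization 2 ≤ Nat.log 2 (m + 1) := by
  rcases Nat.even_or_odd m with ⟨k, hk⟩ | ⟨k, hk⟩
  · have h1 : (m + 1).factorization 2 = 0 := by
      rw [show m + 1 = 2 * k + 1 by omega]
      exact v2_odd k
    have h2 := v2_le_log hm
    have h3 := Nat.log_mono_right (show m ≤ m + 1 by omega) (b := 2)
    omega
  · have h1 : m.factorization 2 = 0 := by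
      rw [show m = 2 * k + 1 by omega]
      exact v2_odd k
    have h2 := v2_le_log (show m + 1 ≠ 0 by omega)
    omega

lemma log_succ_le (m : ℕ) (hm : m ≠ 0) : Nat.log 2 (m + 1) ≤ Nat.log 2 m + 1 := by
  calc Nat.log 2 (m + 1) ≤ Nat.log 2 (2 * m) :=
        Nat.log_mono_right (by omega)
    _ = Nat.log 2 m + 1 := log_two_mul m hm

lemma main (n : ℕ) :
    g n = Finset.range (Nat.log 2 (n + 1) + 1 - (n + 1).factorization 2) ∧
      (n ≠ 0 → c1 n = Finset.Icc (n.factorization 2) (Nat.log 2 n)) := by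
  induction n using Nat.strong_induction_on with
  | _ n ih =>
    rcases Nat.eq_zero_or_pos n with rfl | hn
    · refine ⟨?_, by simp⟩
      rw [g_zero]
      norm_num
    rcases Nat.even_or_odd n with ⟨m, hm⟩ | ⟨m, hm⟩
    · -- n = 2 * m, m ≥ 1
      have hm0 : m ≠ 0 := by omega
      have hmn : m < n := by omega
      obtain ⟨ihg, ihc⟩ := ih m hmn
      have hv := v2_par m hm0
      have hlog := log_succ_le m hm0
      have hvl := v2_le_log hm0
      have hvl1 := v2_le_log (show m + 1 ≠ 0 by omega)
      constructor
      · rw [show n = 2 * m by omega, g_even m hm0, ihg, ihc hm0,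
          Finset.image_add_right_Icc, show 2 * m + 1 = 2 * m + 1 from rfl,
          v2_odd m, log_two_mul_add_one m hm0]
        ext t
        simp only [Finset.mem_union, Finset.mem_range, Finset.mem_Icc]
        omega
      · intro _
        rw [show n = 2 * m by omega, c1_even m hm0, ihc hm0,
          Finset.image_add_right_Icc, v2_two_mul m hm0, log_two_mul m hm0]
    · -- n = 2 * m + 1
      have hmn : m < n := by omega
      obtain ⟨ihg, ihc⟩ := ih m hmn
      constructor
      · rw [show n = 2 * m + 1 by omega, g_odd, ihg,
          show 2 * m + 1 + 1 = 2 * (m + 1) by ring,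
          log_two_mul (m + 1) (by omega), v2_two_mul (m + 1) (by omega)]
        exact congrArg _ (by omega)
      · intro _
        rcases Nat.eq_zero_or_pos m with rfl | hm0
        · rw [show n = 1 by omega]
          ext t
          rw [mem_c1]
          simp only [Finset.mem_Icc]
          constructor
          · rintro ⟨x, hx, rfl⟩
            interval_cases x
            simp [s_zero, s_one, Nat.factorization_one]
          · intro ht
            refine ⟨0, by omega, ?_⟩
            simp only [show (1:ℕ) - 1 - 0 = 0 from rfl, s_zero, s_one,
              Nat.factorization_one, Nat.log_one_right] at *
            omega
        have hv := v2_par m (by omega)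
        have hlog := log_succ_le m (by omega)
        have hvl := v2_le_log (show m ≠ 0 by omega)
        have hvl1 := v2_le_log (show m + 1 ≠ 0 by omega)
        rw [show n = 2 * m + 1 by omega, c1_odd, ihg, ihc (by omega),
          Finset.image_add_right_Icc, v2_odd m, log_two_mul_add_one m (by omega)]
        ext t
        simp only [Finset.mem_union, Finset.mem_range, Finset.mem_Icc]
        omega

end Stmt17Aux

theorem stmt17 (n : ℕ) :
    ((Finset.range (n + 1)).image (fun j => (Nat.choose n j).factorization 2)).card =
      Nat.log 2 (n + 1) + 1 - (n + 1).factorization 2 := by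
  haveI : Fact (Nat.Prime 2) := ⟨Nat.prime_two⟩
  have himg : ((Finset.range (n + 1)).image (fun j => (Nat.choose n j).factorization 2))
      = Stmt17Aux.g n := by
    apply Finset.image_congr
    intro j hj
    simp only [Finset.mem_coe, Finset.mem_range] at hj
    have hjn : j ≤ n := by omega
    have hk := sub_one_mul_padicValNat_choose_eq_sub_sum_digits (p := 2) hjn
    show (n.choose j).factorization 2 = Stmt17Aux.s j + Stmt17Aux.s (n - j) - Stmt17Aux.s n
    rw [Nat.factorization_def _ Nat.prime_two]
    simpa [Stmt17Aux.s] using hk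
  rw [himg, (Stmt17Aux.main n).1, Finset.card_range]
end

section
/- Define a sequence by a(0)=0, a(2n)=a(n)+2n, a(2n+1)=-a(n)+6n+3 (over the integers). Then a nonnegative integer m has an even number of ones in its binary representation if and only if m is in the range of a. -/
lemma ds_mul (n : ℕ) : (Nat.digits 2 (2 * n)).sum = (Nat.digits 2 n).sum := by
  rcases Nat.eq_zero_or_pos n with h | h
  · simp [h]
  · rw [Nat.digits_def' (by norm_num) (by omega)]
    simp [Nat.mul_div_cancel_left n (by norm_num : 0 < 2), Nat.mul_mod_right]

lemma ds_odd (n : ℕ) : (Nat.digits 2 (2 * n + 1)).sum = (Nat.digits 2 n).sum + 1 := by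
  rw [Nat.digits_def' (by norm_num) (by omega)]
  have h1 : (2 * n + 1) % 2 = 1 := by omega
  have h2 : (2 * n + 1) / 2 = n := by omega
  rw [h1, h2]
  simp [Nat.add_comm]

theorem stmt18 (a : ℕ → ℤ) (h0 : a 0 = 0)
    (heven : ∀ n : ℕ, a (2 * n) = a n + 2 * n)
    (hodd : ∀ n : ℕ, a (2 * n + 1) = -a n + 6 * n + 3) (m : ℕ) :
    Even ((Nat.digits 2 m).sum) ↔ ∃ n : ℕ, a n = m := by
  have key : ∀ n : ℕ, a n = 2 * n + ((Nat.digits 2 n).sum % 2 : ℕ) := by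
    intro n
    induction n using Nat.strong_induction_on with
    | _ n ih =>
      rcases Nat.even_or_odd n with ⟨k, hk⟩ | ⟨k, hk⟩
      · have hn : n = 2 * k := by omega
        subst hn
        rcases Nat.eq_zero_or_pos k with h | h
        · simp [h, h0]
        · have := ih k (by omega)
          rw [heven k, this, ds_mul]
          push_cast
          ring
      · have hn : n = 2 * k + 1 := by omega
        subst hn
        have := ih k (by omega)
        rw [hodd k, this, ds_odd]
        have h1 : (Nat.digits 2 k).sum % 2 < 2 := Nat.mod_lt _ (by norm_num)
        have h2 : ((Nat.digits 2 k).sum + 1) % 2 + (Nat.digits 2 k).sum % 2 = 1 := by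
          omega
        push_cast
        omega
  constructor
  · intro hev
    rcases Nat.even_or_odd m with ⟨k, hk⟩ | ⟨k, hk⟩
    · have hm : m = 2 * k := by omega
      subst hm
      refine ⟨k, ?_⟩
      rw [key k]
      rw [ds_mul] at hev
      have : (Nat.digits 2 k).sum % 2 = 0 := Nat.even_iff.mp hev
      rw [this]
      push_cast; ring
    · have hm : m = 2 * k + 1 := by omega
      subst hm
      refine ⟨k, ?_⟩
      rw [key k]
      rw [ds_odd] at hev
      have : (Nat.digits 2 k).sum % 2 = 1 := by
        have := Nat.even_iff.mp hev
        omega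
      rw [this]
      push_cast; ring
  · rintro ⟨n, hn⟩
    rw [key n] at hn
    have h1 : (Nat.digits 2 n).sum % 2 < 2 := Nat.mod_lt _ (by norm_num)
    rcases (by omega : (Nat.digits 2 n).sum % 2 = 0 ∨ (Nat.digits 2 n).sum % 2 = 1) with h | h
    · have hm : m = 2 * n := by rw [h] at hn; push_cast at hn; omega
      subst hm
      rw [ds_mul]
      exact Nat.even_iff.mpr h
    · have hm : m = 2 * n + 1 := by rw [h] at hn; push_cast at hn; omega
      subst hm
      rw [ds_odd]
      have : (Nat.digits 2 n).sum % 2 = 1 := h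
      refine Nat.even_iff.mpr ?_
      omega
end
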